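/- arXiv:1903.06975 — 5 statements merged into one kernel-verified Lean document; each statement's English description precedes it below -/
import Mathlib

section
/- For two ideals I and J of a commutative ring A, V(I) ⊆ V(J) if and only if the real radical of I contains the real radical of J. -/
/-- An ideal `J` of a commutative ring is *real* if whenever a finite sum of squares
`∑ i, a i ^ 2` lies in `J`, each `a i` lies in `J`. -/
def IsRealIdeal {A : Type*} [CommRing A] (J : Ideal A) : Prop :=
  ∀ (n : ℕ) (a : Fin n → A), (∑ i, a i ^ 2) ∈ J → ∀ i, a i ∈ J

/-- The real Zariski spectrum: the set of real prime ideals of `A`. -/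
structure RealSpectrum (A : Type*) [CommRing A] where
  asIdeal : Ideal A
  isPrime : asIdeal.IsPrime
  isReal : IsRealIdeal asIdeal

namespace RealSpectrum

variable {A : Type*} [CommRing A]

instance (p : RealSpectrum A) : p.asIdeal.IsPrime := p.isPrime

/-- `V(I)`: the set of real prime ideals containing `I`. -/
def zeroLocus (I : Ideal A) : Set (RealSpectrum A) := {p | I ≤ p.asIdeal}

/-- `D(f)`: the set of real prime ideals not containing `f`. -/
def basicOpen (f : A) : Set (RealSpectrum A) := {p | f ∉ p.asIdeal}

end RealSpectrum

/-- The real radical of an ideal `I`: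
`√[R]{I} = { a : ∃ m n (b : Fin n → A), a ^ (2 * m) + ∑ i, b i ^ 2 ∈ I }`. -/
def realRadical {A : Type*} [CommRing A] (I : Ideal A) : Set A :=
  {a | ∃ (m n : ℕ) (b : Fin n → A), a ^ (2 * m) + ∑ i, b i ^ 2 ∈ I}

section Aux

variable {A : Type*} [CommRing A]

private lemma isSumSq_fin_sum_sq {n : ℕ} (b : Fin n → A) : IsSumSq (∑ i, b i ^ 2) := by
  simpa only [sq] using IsSumSq.sum_mul_self Finset.univ b

private lemma IsSumSq.exists_fin {s : A} (h : IsSumSq s) :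
    ∃ (n : ℕ) (b : Fin n → A), s = ∑ i, b i ^ 2 := by
  induction h with
  | zero => exact ⟨0, ![], by simp⟩
  | @sq_add a S _ ih =>
    obtain ⟨n, b, rfl⟩ := ih
    refine ⟨n + 1, Fin.cons a b, ?_⟩
    rw [Fin.sum_univ_succ]
    simp [sq]

private lemma mem_realRadical_iff {I : Ideal A} {a : A} :
    a ∈ realRadical I ↔ ∃ (m : ℕ) (s : A), IsSumSq s ∧ a ^ (2 * m) + s ∈ I := by
  constructor
  · rintro ⟨m, n, b, h⟩
    exact ⟨m, ∑ i, b i ^ 2, isSumSq_fin_sum_sq b, h⟩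
  · rintro ⟨m, s, hs, h⟩
    obtain ⟨n, b, rfl⟩ := hs.exists_fin
    exact ⟨m, n, b, h⟩

private lemma mem_realRadical_of_mem {I : Ideal A} {a : A} (h : a ∈ I) :
    a ∈ realRadical I := by
  refine ⟨1, 0, ![], ?_⟩
  simpa [pow_succ, pow_zero] using I.mul_mem_left a h

private lemma IsSumSq.mul_self_mul {t : A} (x : A) (ht : IsSumSq t) :
    IsSumSq (x * x * t) := by
  induction ht with
  | zero => simpa using IsSumSq.zero
  | @sq_add y T _ ih =>
    have h : x * x * (y * y + T) = (x * y) * (x * y) + x * x * T := by ring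
    rw [h]; exact IsSumSq.sq_add _ ih

/-- If `x * y ∈ p` and `a` lies in the real radicals of both `p ⊔ (x)` and `p ⊔ (y)`,
then `a` lies in the real radical of `p`. -/
private lemma realRadical_absorb {p : Ideal A} {x y a : A} (hxy : x * y ∈ p)
    (hx : a ∈ realRadical (p ⊔ Ideal.span {x})) (hy : a ∈ realRadical (p ⊔ Ideal.span {y})) :
    a ∈ realRadical p := by
  rw [mem_realRadical_iff] at hx hy ⊢
  obtain ⟨m, s, hs, h1⟩ := hx
  obtain ⟨m', s', hs', h2⟩ := hy
  obtain ⟨q, hq, z, hz, hqz⟩ := Submodule.mem_sup.1 h1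
  obtain ⟨r, rfl⟩ := Ideal.mem_span_singleton'.1 hz
  obtain ⟨q', hq', z', hz', hqz'⟩ := Submodule.mem_sup.1 h2
  obtain ⟨r', rfl⟩ := Ideal.mem_span_singleton'.1 hz'
  refine ⟨m + m', a ^ (2 * m) * s' + s * a ^ (2 * m') + s * s', ?_, ?_⟩
  · have h2m : IsSumSq (a ^ (2 * m)) := by
      have : a ^ (2 * m) = a ^ m * a ^ m + 0 := by ring
      rw [this]; exact IsSumSq.sq_add _ IsSumSq.zero
    have h2m' : IsSumSq (a ^ (2 * m')) := by
      have : a ^ (2 * m') = a ^ m' * a ^ m' + 0 := by ring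
      rw [this]; exact IsSumSq.sq_add _ IsSumSq.zero
    exact ((h2m.mul hs').add (hs.mul h2m')).add (hs.mul hs')
  · have key : a ^ (2 * (m + m')) + (a ^ (2 * m) * s' + s * a ^ (2 * m') + s * s')
        = q * (q' + r' * y) + q' * (r * x) + (r * r') * (x * y) := by
      have hprod : (a ^ (2 * m) + s) * (a ^ (2 * m') + s')
          = (q + r * x) * (q' + r' * y) := by rw [hqz, hqz']
      linear_combination hprod
    rw [key]
    exact p.add_mem (p.add_mem (p.mul_mem_right _ hq) (p.mul_mem_right _ hq'))
      (p.mul_mem_left _ hxy)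

/-- Key step for realness: if `∑ c i ^ 2 ∈ p` and `a` lies in the real radical of
`p ⊔ (c j)`, then `a` lies in the real radical of `p`. -/
private lemma realRadical_absorb_sq {p : Ideal A} {n : ℕ} {c : Fin n → A} {a : A} {j : Fin n}
    (hc : (∑ i, c i ^ 2) ∈ p) (hj : a ∈ realRadical (p ⊔ Ideal.span {c j})) :
    a ∈ realRadical p := by
  rw [mem_realRadical_iff] at hj ⊢
  obtain ⟨m, s, hs, h1⟩ := hj
  obtain ⟨q, hq, z, hz, hqz⟩ := Submodule.mem_sup.1 h1
  obtain ⟨r, rfl⟩ := Ideal.mem_span_singleton'.1 hz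
  set S' : A := ∑ i ∈ Finset.univ.erase j, c i ^ 2 with hS'def
  have hS' : c j ^ 2 + S' = ∑ i, c i ^ 2 := Finset.add_sum_erase _ (fun i => c i ^ 2) (Finset.mem_univ j)
  refine ⟨2 * m, a ^ (2 * m) * s + s * a ^ (2 * m) + s * s + (r * r) * S', ?_, ?_⟩
  · have h2m : IsSumSq (a ^ (2 * m)) := by
      have : a ^ (2 * m) = a ^ m * a ^ m + 0 := by ring
      rw [this]; exact IsSumSq.sq_add _ IsSumSq.zero
    have hS'sq : IsSumSq S' := by
      rw [hS'def]; simpa only [sq] using IsSumSq.sum_mul_self _ c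
    exact (((h2m.mul hs).add (hs.mul h2m)).add (hs.mul hs)).add (hS'sq.mul_self_mul r)
  · have key : a ^ (2 * (2 * m)) + (a ^ (2 * m) * s + s * a ^ (2 * m) + s * s + (r * r) * S')
        = q * (q + 2 * (r * c j)) + (r * r) * (∑ i, c i ^ 2) := by
      have hsq : (a ^ (2 * m) + s) * (a ^ (2 * m) + s) = (q + r * c j) * (q + r * c j) := by
        rw [hqz]
      linear_combination hsq + (r * r) * hS'
    rw [key]
    exact p.add_mem (p.mul_mem_right _ hq) (p.mul_mem_left _ hc)

/-- Abstract real Nullstellensatz: if `a ∉ √[R]{I}` then there is a real prime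
containing `I` and avoiding `a`. -/
private lemma exists_real_prime {I : Ideal A} {a : A} (ha : a ∉ realRadical I) :
    ∃ p : RealSpectrum A, I ≤ p.asIdeal ∧ a ∉ p.asIdeal := by
  set T : Set (Ideal A) := {K | I ≤ K ∧ a ∉ realRadical K} with hT
  have hchain : ∀ c ⊆ T, IsChain (· ≤ ·) c → ∀ y ∈ c, ∃ ub ∈ T, ∀ z ∈ c, z ≤ ub := by
    intro c hcT hc y hy
    refine ⟨sSup c, ⟨(hcT hy).1.trans (le_sSup hy), ?_⟩, fun z hz => le_sSup hz⟩
    rintro ⟨m, n, b, hmem⟩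
    obtain ⟨K, hKc, hK⟩ := (Submodule.mem_sSup_of_directed ⟨y, hy⟩ hc.directedOn).1 hmem
    exact (hcT hKc).2 ⟨m, n, b, hK⟩
  obtain ⟨p, -, hpT, hpmax⟩ := zorn_le_nonempty₀ T hchain I ⟨le_rfl, ha⟩
  obtain ⟨hIp, hap⟩ := hpT
  -- every strictly larger ideal has `a` in its real radical
  have hstep : ∀ x : A, x ∉ p → a ∈ realRadical (p ⊔ Ideal.span {x}) := by
    intro x hx
    by_contra h
    have hKT : p ⊔ Ideal.span {x} ∈ T := ⟨hIp.trans le_sup_left, h⟩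
    have hle : Ideal.span {x} ≤ p := le_sup_right.trans (hpmax hKT le_sup_left)
    exact hx (hle (Ideal.mem_span_singleton_self x))
  have hane : a ∉ p := fun h => hap (mem_realRadical_of_mem h)
  have hprime : p.IsPrime := by
    refine ⟨fun htop => ?_, fun {x y} hxy => ?_⟩
    · exact hap (mem_realRadical_of_mem (htop ▸ Submodule.mem_top))
    · by_contra h
      push_neg at h
      exact hap (realRadical_absorb hxy (hstep x h.1) (hstep y h.2))
  have hreal : IsRealIdeal p := by
    intro n c hsum j
    by_contra hcj
    exact hap (realRadical_absorb_sq hsum (hstep (c j) hcj))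
  exact ⟨⟨p, hprime, hreal⟩, hIp, hane⟩

/-- A real prime (indeed any real radical-closed prime) containing `J` contains `√[R]{J}`. -/
private lemma realRadical_le_of_le {J p : Ideal A} (hprime : p.IsPrime)
    (hreal : IsRealIdeal p) (hJp : J ≤ p) : realRadical J ⊆ (p : Set A) := by
  rintro a ⟨m, n, b, hmem⟩
  have hmem' : (∑ i, (Fin.cons (a ^ m) b : Fin (n + 1) → A) i ^ 2) ∈ p := by
    rw [Fin.sum_univ_succ]
    simpa [← pow_mul, mul_comm] using hJp hmem
  have := hreal (n + 1) _ hmem' 0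
  rw [Fin.cons_zero] at this
  exact hprime.mem_of_pow_mem m this

end Aux

open RealSpectrum in
/-- `V(I) ⊆ V(J)` if and only if `√[R]{I} ⊇ √[R]{J}`. -/
theorem zeroLocus_subset_zeroLocus_iff {A : Type*} [CommRing A] (I J : Ideal A) :
    zeroLocus I ⊆ zeroLocus J ↔ realRadical J ⊆ realRadical I := by
  constructor
  · intro h a ha
    by_contra han
    obtain ⟨p, hIp, hap⟩ := exists_real_prime han
    exact hap (realRadical_le_of_le p.isPrime p.isReal (h hIp) ha)
  · intro h p hIp
    intro x hx
    exact realRadical_le_of_le p.isPrime p.isReal hIp (h (mem_realRadical_of_mem hx))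
end

section
/- Let A be a commutative ring, f ∈ A, and Σ_f = { f^{2m} + Σ_{i=1}^n a_i² : a_i ∈ A, m, n ∈ ℕ ∪ {0} }. The canonical ring homomorphism ψ from the localization Σ_f^{-1}A to the ring of abstract real regular functions on D(f), sending a/(f^{2n} + Σ x²) to the function p ↦ a/(f^{2n} + Σ x²) ∈ A_p, is injective. Equivalently: if a, b ∈ A and σ, τ ∈ Σ_f satisfy aτ/σ τ = bσ/σ τ in A_p for every real prime ideal p ∈ D(f), then there exists ρ ∈ Σ_f with ρ(aτ − bσ) = 0 in A. -/
/-- The multiplicative subset `Σ_f = { f ^ (2m) + ∑ aᵢ² }` of `A`, as a set. -/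
def sigmaSet {A : Type*} [CommRing A] (f : A) : Set A :=
  {x | ∃ (m n : ℕ) (c : Fin n → A), x = f ^ (2 * m) + ∑ i, c i ^ 2}

section Aux

variable {A : Type*} [CommRing A]

lemma isSumSq_sq_mul (a : A) {t : A} (ht : IsSumSq t) : IsSumSq (a * a * t) := by
  induction ht with
  | zero => simpa using IsSumSq.zero
  | @sq_add b T pT ih =>
    have : a * a * (b * b + T) = (a * b) * (a * b) + a * a * T := by ring
    rw [this]
    exact IsSumSq.sq_add _ ih

lemma isSumSq_mul {s t : A} (hs : IsSumSq s) (ht : IsSumSq t) : IsSumSq (s * t) := by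
  induction hs with
  | zero => simpa using IsSumSq.zero
  | @sq_add a S pS ih =>
    rw [add_mul]
    exact (isSumSq_sq_mul a ht).add ih

lemma isSumSq_exists_sum {s : A} (hs : IsSumSq s) :
    ∃ (n : ℕ) (c : Fin n → A), s = ∑ i, c i ^ 2 := by
  induction hs with
  | zero => exact ⟨0, ![], by simp⟩
  | @sq_add a S pS ih =>
    obtain ⟨n, c, rfl⟩ := ih
    exact ⟨n + 1, Fin.cons a c, by simp [Fin.sum_univ_succ, pow_two]⟩

lemma mem_sigmaSet_iff {f x : A} :
    x ∈ sigmaSet f ↔ ∃ (m : ℕ) (s : A), IsSumSq s ∧ x = f ^ (2 * m) + s := by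
  constructor
  · rintro ⟨m, n, c, rfl⟩
    refine ⟨m, ∑ i, c i ^ 2, ?_, rfl⟩
    have := IsSumSq.sum_mul_self (Finset.univ : Finset (Fin n)) c
    simpa [pow_two] using this
  · rintro ⟨m, s, hs, rfl⟩
    obtain ⟨n, c, rfl⟩ := isSumSq_exists_sum hs
    exact ⟨m, n, c, rfl⟩

lemma sigmaSet_one_mem (f : A) : (1 : A) ∈ sigmaSet f :=
  mem_sigmaSet_iff.2 ⟨0, 0, IsSumSq.zero, by simp⟩

lemma sigmaSet_sq_mem (f : A) : f * f ∈ sigmaSet f :=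
  mem_sigmaSet_iff.2 ⟨1, 0, IsSumSq.zero, by ring⟩

lemma sigmaSet_mul_mem {f x y : A} (hx : x ∈ sigmaSet f) (hy : y ∈ sigmaSet f) :
    x * y ∈ sigmaSet f := by
  rw [mem_sigmaSet_iff] at hx hy ⊢
  obtain ⟨m, s, hs, rfl⟩ := hx
  obtain ⟨m', t, ht, rfl⟩ := hy
  refine ⟨m + m', f ^ (2 * m) * t + f ^ (2 * m') * s + s * t, ?_, by ring⟩
  have h1 : IsSumSq (f ^ (2 * m) * t) := by
    have : (f ^ (2 * m) : A) = f ^ m * f ^ m + 0 := by ring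
    exact isSumSq_mul (this ▸ IsSumSq.sq_add _ IsSumSq.zero) ht
  have h2 : IsSumSq (f ^ (2 * m') * s) := by
    have : (f ^ (2 * m') : A) = f ^ m' * f ^ m' + 0 := by ring
    exact isSumSq_mul (this ▸ IsSumSq.sq_add _ IsSumSq.zero) hs
  exact (h1.add h2).add (isSumSq_mul hs ht)

lemma sigmaSet_add_isSumSq {f x t : A} (hx : x ∈ sigmaSet f) (ht : IsSumSq t) :
    x + t ∈ sigmaSet f := by
  rw [mem_sigmaSet_iff] at hx ⊢
  obtain ⟨m, s, hs, rfl⟩ := hx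
  exact ⟨m, s + t, hs.add ht, by ring⟩

end Aux

open RealSpectrum in
/-- Injectivity of the canonical map `Σ_f⁻¹A → O_X(D(f))`: if `a/σ` and `b/τ`
(`σ, τ ∈ Σ_f`) induce the same fraction `aτ/στ = bσ/στ` in `A_p` for every real prime
`p ∈ D(f)`, then there is `ρ ∈ Σ_f` with `ρ (aτ - bσ) = 0` in `A`. -/
theorem canonical_map_injective {A : Type*} [CommRing A] (f a b σ τ : A)
    (hσ : σ ∈ sigmaSet f) (hτ : τ ∈ sigmaSet f)
    (h : ∀ p : RealSpectrum A, f ∉ p.asIdeal → ∀ hστ : σ * τ ∉ p.asIdeal,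
      IsLocalization.mk' (Localization.AtPrime p.asIdeal) (a * τ)
          (⟨σ * τ, hστ⟩ : p.asIdeal.primeCompl) =
        IsLocalization.mk' (Localization.AtPrime p.asIdeal) (b * σ)
          (⟨σ * τ, hστ⟩ : p.asIdeal.primeCompl)) :
    ∃ ρ ∈ sigmaSet f, ρ * (a * τ - b * σ) = 0 := by
  by_contra hcon
  push_neg at hcon
  set d : A := a * τ - b * σ with hd
  -- the annihilator of d
  let I : Ideal A :=
    { carrier := {x | x * d = 0}
      add_mem' := fun {x y} hx hy => by
        simp only [Set.mem_setOf_eq] at *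
        rw [add_mul, hx, hy, add_zero]
      zero_mem' := by simp
      smul_mem' := fun c x hx => by
        simp only [Set.mem_setOf_eq, smul_eq_mul] at *
        rw [mul_assoc, hx, mul_zero] }
  have hIdisj : ∀ x ∈ I, x ∉ sigmaSet f := by
    intro x hx hxs
    exact hcon x hxs hx
  -- Zorn: a maximal ideal containing I and disjoint from sigmaSet f
  obtain ⟨p, hIp, hpmax⟩ := zorn_le_nonempty₀
      {J : Ideal A | I ≤ J ∧ ∀ x ∈ J, x ∉ sigmaSet f}
      (fun c hcsub hchain y hyc => by
        refine ⟨sSup c, ⟨le_trans (hcsub hyc).1 (le_sSup hyc), ?_⟩, fun z hz => le_sSup hz⟩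
        intro x hx hxs
        obtain ⟨J, hJc, hxJ⟩ := (Submodule.mem_sSup_of_directed ⟨y, hyc⟩
          (hchain.directedOn)).1 hx
        exact (hcsub hJc).2 x hxJ hxs)
      I ⟨le_rfl, hIdisj⟩
  obtain ⟨⟨hIp', hpdisj⟩, hmax⟩ := hpmax
  -- basic facts
  have hone : (1 : A) ∉ p := fun h1 => hpdisj 1 h1 (sigmaSet_one_mem f)
  have hfp : f ∉ p := fun hf => hpdisj (f * f) (Ideal.mul_mem_left _ _ hf) (sigmaSet_sq_mem f)
  -- key: any element outside p yields an element of sigmaSet f in p + (x)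
  have key : ∀ x : A, x ∉ p → ∃ s ∈ sigmaSet f, ∃ r : A, ∃ q ∈ p, s = r * x + q := by
    intro x hx
    by_cases hmem : ∀ z ∈ Ideal.span {x} ⊔ p, z ∉ sigmaSet f
    · exfalso
      have : Ideal.span {x} ⊔ p ≤ p := by
        refine hmax ⟨le_trans hIp' le_sup_right, hmem⟩ le_sup_right
      exact hx (this (Ideal.mem_sup_left (Ideal.subset_span (Set.mem_singleton x))))
    · push_neg at hmem
      obtain ⟨s, hs1, hs2⟩ := hmem
      obtain ⟨r, q, hq, hrq⟩ := Ideal.mem_span_singleton_sup.1 hs1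
      exact ⟨s, hs2, r, q, hq, hrq.symm⟩
  -- p is prime
  have hprime : p.IsPrime := by
    constructor
    · intro htop
      exact hone (htop ▸ Submodule.mem_top)
    · intro x y hxy
      by_contra hc
      push_neg at hc
      obtain ⟨hx, hy⟩ := hc
      obtain ⟨s₁, hs₁, r₁, q₁, hq₁, he₁⟩ := key x hx
      obtain ⟨s₂, hs₂, r₂, q₂, hq₂, he₂⟩ := key y hy
      have hmem : s₁ * s₂ ∈ p := by
        have : s₁ * s₂ = (r₁ * r₂) * (x * y) + (q₁ * s₂ + r₁ * x * q₂) := by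
          rw [he₁, he₂]; ring
        rw [this]
        exact Ideal.add_mem _ (Ideal.mul_mem_left _ _ hxy)
          (Ideal.add_mem _ (Ideal.mul_mem_right _ _ hq₁) (Ideal.mul_mem_left _ _ hq₂))
      exact hpdisj _ hmem (sigmaSet_mul_mem hs₁ hs₂)
  -- p is real
  have hreal : IsRealIdeal p := by
    intro n c hsum j
    by_contra hcj
    obtain ⟨s, hs, r, q, hq, he⟩ := key (c j) hcj
    set t : A := ∑ i ∈ Finset.univ.erase j, c i ^ 2 with ht
    have hsplit : c j ^ 2 + t = ∑ i, c i ^ 2 :=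
      Finset.add_sum_erase Finset.univ (fun i => c i ^ 2) (Finset.mem_univ j)
    have hρ : s * s + r ^ 2 * t ∈ sigmaSet f := by
      refine sigmaSet_add_isSumSq (sigmaSet_mul_mem hs hs) ?_
      refine isSumSq_mul ?_ ?_
      · have : (r ^ 2 : A) = r * r + 0 := by ring
        exact this ▸ IsSumSq.sq_add _ IsSumSq.zero
      · have := IsSumSq.sum_mul_self (Finset.univ.erase j) c
        simpa only [pow_two, ht] using this
    have hρp : s * s + r ^ 2 * t ∈ p := by
      have heq : s * s + r ^ 2 * t = q * (q + 2 * (r * c j)) + r ^ 2 * (∑ i, c i ^ 2) := by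
        rw [← hsplit, he]; ring
      rw [heq]
      exact Ideal.add_mem _ (Ideal.mul_mem_right _ _ hq) (Ideal.mul_mem_left _ _ hsum)
    exact hpdisj _ hρp hρ
  -- assemble the real prime and derive contradiction
  set P : RealSpectrum A := ⟨p, hprime, hreal⟩
  have hστ : σ * τ ∉ p := fun hmem => hpdisj _ hmem (sigmaSet_mul_mem hσ hτ)
  have heq := h P hfp hστ
  have halg : algebraMap A (Localization.AtPrime p) (a * τ) =
      algebraMap A (Localization.AtPrime p) (b * σ) := by
    calc algebraMap A (Localization.AtPrime p) (a * τ)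
        = IsLocalization.mk' (Localization.AtPrime p) (a * τ)
            (⟨σ * τ, hστ⟩ : p.primeCompl) *
          algebraMap A (Localization.AtPrime p)
            ((⟨σ * τ, hστ⟩ : p.primeCompl) : A) :=
          (IsLocalization.mk'_spec _ _ _).symm
      _ = IsLocalization.mk' (Localization.AtPrime p) (b * σ)
            (⟨σ * τ, hστ⟩ : p.primeCompl) *
          algebraMap A (Localization.AtPrime p)
            ((⟨σ * τ, hστ⟩ : p.primeCompl) : A) := by rw [heq]
      _ = algebraMap A (Localization.AtPrime p) (b * σ) :=
          IsLocalization.mk'_spec _ _ _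
  obtain ⟨e, he⟩ := (IsLocalization.eq_iff_exists p.primeCompl _).1 halg
  have hed : (e : A) * d = 0 := by
    rw [hd, mul_sub, he, sub_self]
  exact e.2 (hIp' hed)
end

section
/- Let A be a real ring, f ∈ A, and X the real Zariski spectrum of A. Then the canonical homomorphism ψ : Σ_f^{-1}A → O_X(D(f)), sending a/(f^{2n} + Σ x²) to the function p ↦ a/(f^{2n} + Σ x²) ∈ A_p, is a ring isomorphism; in particular it is surjective: every abstract real regular function s on D(f) is of the form p ↦ a/(f^{2k} + Σ x²) for some a ∈ A, k ∈ ℕ, and sum of squares Σ x² in A. -/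
/-- A commutative ring is *real* if a finite sum of squares vanishes only when
each of the summands' base elements vanishes. -/
def IsRealRing (A : Type*) [CommRing A] : Prop :=
  ∀ (n : ℕ) (a : Fin n → A), (∑ i, a i ^ 2) = 0 → ∀ i, a i = 0

namespace RealSpectrum

variable {A : Type*} [CommRing A]

/-- The real Zariski topology, whose closed sets are exactly the sets `zeroLocus I`. -/
instance zariskiTopology : TopologicalSpace (RealSpectrum A) :=
  TopologicalSpace.ofClosed {s | ∃ I : Ideal A, s = zeroLocus I}
    ⟨⊤, by
      ext p
      simp only [Set.mem_empty_iff_false, zeroLocus, Set.mem_setOf_eq, false_iff]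
      exact fun h => p.isPrime.ne_top (top_le_iff.mp h)⟩
    (fun F hF => ⟨sSup {I : Ideal A | zeroLocus I ∈ F}, by
      ext p
      simp only [Set.mem_sInter, zeroLocus, Set.mem_setOf_eq, sSup_le_iff]
      constructor
      · intro h I hI
        exact h (zeroLocus I) hI
      · intro h s hs
        obtain ⟨I, rfl⟩ := hF hs
        exact h I hs⟩)
    (by
      rintro _ ⟨I, rfl⟩ _ ⟨J, rfl⟩
      refine ⟨I * J, ?_⟩
      ext p
      simp only [Set.mem_union, zeroLocus, Set.mem_setOf_eq, p.isPrime.mul_le])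

theorem isClosed_iff (s : Set (RealSpectrum A)) :
    IsClosed s ↔ ∃ I : Ideal A, s = zeroLocus I := by
  rw [← isOpen_compl_iff]
  change sᶜᶜ ∈ _ ↔ _
  rw [compl_compl]
  rfl

theorem basicOpen_eq_compl (f : A) :
    basicOpen f = (zeroLocus (Ideal.span {f}))ᶜ := by
  ext p
  simp [basicOpen, zeroLocus, Ideal.span_le, Set.singleton_subset_iff]

theorem isOpen_basicOpen (f : A) : IsOpen (basicOpen f) := by
  rw [basicOpen_eq_compl, isOpen_compl_iff, isClosed_iff]
  exact ⟨_, rfl⟩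

end RealSpectrum

/-- The set of finite sums of squares in `A`. -/
def SumSq (A : Type*) [CommRing A] : Set A :=
  {x | ∃ (n : ℕ) (c : Fin n → A), x = ∑ i, c i ^ 2}

theorem SumSq.zero {A : Type*} [CommRing A] : (0 : A) ∈ SumSq A := ⟨0, fun i => 0, by simp⟩

theorem SumSq.sq {A : Type*} [CommRing A] (a : A) : a ^ 2 ∈ SumSq A := ⟨1, fun _ => a, by simp⟩

theorem SumSq.add {A : Type*} [CommRing A] {x y : A} (hx : x ∈ SumSq A) (hy : y ∈ SumSq A) :
    x + y ∈ SumSq A := by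
  obtain ⟨n, c, rfl⟩ := hx
  obtain ⟨m, d, rfl⟩ := hy
  exact ⟨n + m, Fin.append c d, by
    simp [Fin.sum_univ_add, Fin.append_left, Fin.append_right]⟩

theorem SumSq.mul {A : Type*} [CommRing A] {x y : A} (hx : x ∈ SumSq A) (hy : y ∈ SumSq A) :
    x * y ∈ SumSq A := by
  obtain ⟨n, c, rfl⟩ := hx
  obtain ⟨m, d, rfl⟩ := hy
  refine ⟨n * m, fun k => c (finProdFinEquiv.symm k).1 * d (finProdFinEquiv.symm k).2, ?_⟩
  rw [Finset.sum_mul_sum]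
  rw [show ∑ i : Fin (n * m),
      (fun k => c (finProdFinEquiv.symm k).1 * d (finProdFinEquiv.symm k).2) i ^ 2
      = ∑ q : Fin n × Fin m, (c q.1 * d q.2) ^ 2 from
    Equiv.sum_comp finProdFinEquiv.symm (fun q : Fin n × Fin m => (c q.1 * d q.2) ^ 2)]
  simp [Fintype.sum_prod_type, mul_pow]

namespace RealSpectrum

variable {A : Type*} [CommRing A]

/-- The multiplicative set `Σ_f = { f ^ (2 * m) + ∑ i, a i ^ 2 }`. -/
def sigmaMonoid (f : A) : Submonoid A where
  carrier := {x | ∃ (m : ℕ), ∃ s ∈ SumSq A, x = f ^ (2 * m) + s}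
  one_mem' := ⟨0, 0, SumSq.zero, by simp⟩
  mul_mem' := by
    rintro x y ⟨m, s, hs, rfl⟩ ⟨m', t, ht, rfl⟩
    refine ⟨m + m', f ^ (2 * m) * t + f ^ (2 * m') * s + s * t, ?_, by ring⟩
    have h1 : f ^ (2 * m) ∈ SumSq A := by
      have := SumSq.sq (f ^ m); rwa [← pow_mul, mul_comm m 2] at this
    have h2 : f ^ (2 * m') ∈ SumSq A := by
      have := SumSq.sq (f ^ m'); rwa [← pow_mul, mul_comm m' 2] at this
    exact SumSq.add (SumSq.add (SumSq.mul h1 ht) (SumSq.mul h2 hs)) (SumSq.mul hs ht)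

theorem mem_sigmaMonoid_iff (f x : A) :
    x ∈ sigmaMonoid f ↔ ∃ (m n : ℕ) (c : Fin n → A), x = f ^ (2 * m) + ∑ i, c i ^ 2 := by
  constructor
  · rintro ⟨m, s, ⟨n, c, rfl⟩, rfl⟩
    exact ⟨m, n, c, rfl⟩
  · rintro ⟨m, n, c, rfl⟩
    exact ⟨m, _, ⟨n, c, rfl⟩, rfl⟩

/-- The multiplicative set `Σ_1 = { 1 + ∑ i, a i ^ 2 }`. -/
def sigma1 (A : Type*) [CommRing A] : Submonoid A where
  carrier := {x | ∃ s ∈ SumSq A, x = 1 + s}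
  one_mem' := ⟨0, SumSq.zero, by simp⟩
  mul_mem' := by
    rintro x y ⟨s, hs, rfl⟩ ⟨t, ht, rfl⟩
    exact ⟨s + t + s * t, SumSq.add (SumSq.add hs ht) (SumSq.mul hs ht), by ring⟩

theorem mem_sigma1_iff (x : A) :
    x ∈ sigma1 A ↔ ∃ (n : ℕ) (c : Fin n → A), x = 1 + ∑ i, c i ^ 2 := by
  constructor
  · rintro ⟨s, ⟨n, c, rfl⟩, rfl⟩
    exact ⟨n, c, rfl⟩
  · rintro ⟨n, c, rfl⟩
    exact ⟨_, ⟨n, c, rfl⟩, rfl⟩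

end RealSpectrum

namespace RealSpectrum

variable {A : Type*} [CommRing A]

/-- An *abstract real regular function* on `U ⊆ RealSpectrum A`: a dependent function `s`
assigning to each `p ∈ U` an element of the localization `A_p`, such that around every
point of `U` it is given by a single fraction `a / g` with `g` outside all the primes of
the neighborhood. -/
def IsLocallyFraction {U : Set (RealSpectrum A)}
    (s : ∀ p : U, Localization.AtPrime (p : RealSpectrum A).asIdeal) : Prop :=
  ∀ p : U, ∃ V : Set (RealSpectrum A), IsOpen V ∧ (p : RealSpectrum A) ∈ V ∧ V ⊆ U ∧
    ∃ a g : A, ∀ q : U, (q : RealSpectrum A) ∈ V →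
      ∃ hg : g ∉ (q : RealSpectrum A).asIdeal,
        s q = IsLocalization.mk' (Localization.AtPrime (q : RealSpectrum A).asIdeal) a
          (⟨g, hg⟩ : (q : RealSpectrum A).asIdeal.primeCompl)

end RealSpectrum

namespace RealSpectrum

variable {A : Type*} [CommRing A]

/-- The ring `O_X(U)` of abstract real regular functions on an open set `U`, as a
subring of the product of the localizations `A_p`, with pointwise operations. -/
def regularFunctions (U : Set (RealSpectrum A)) (hU : IsOpen U) :
    Subring (∀ p : U, Localization.AtPrime (p : RealSpectrum A).asIdeal) where
  carrier := {s | IsLocallyFraction s}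
  zero_mem' := fun p => ⟨U, hU, p.2, le_refl U, 0, 1, fun q _ =>
    ⟨fun h1 => (q : RealSpectrum A).isPrime.ne_top ((Ideal.eq_top_iff_one _).mpr h1), by
      simp [IsLocalization.mk'_zero]⟩⟩
  one_mem' := fun p => ⟨U, hU, p.2, le_refl U, 1, 1, fun q _ =>
    ⟨fun h1 => (q : RealSpectrum A).isPrime.ne_top ((Ideal.eq_top_iff_one _).mpr h1), by
      have : (⟨1, _⟩ : (q : RealSpectrum A).asIdeal.primeCompl) = 1 := rfl
      rw [this, IsLocalization.mk'_one]
      simp⟩⟩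
  add_mem' := by
    rintro s t hs ht p
    obtain ⟨V₁, hV₁, hpV₁, hV₁U, a₁, g₁, h₁⟩ := hs p
    obtain ⟨V₂, hV₂, hpV₂, hV₂U, a₂, g₂, h₂⟩ := ht p
    refine ⟨V₁ ∩ V₂, hV₁.inter hV₂, ⟨hpV₁, hpV₂⟩, fun x hx => hV₁U hx.1,
      a₁ * g₂ + a₂ * g₁, g₁ * g₂, fun q hq => ?_⟩
    obtain ⟨hg₁, e₁⟩ := h₁ q hq.1
    obtain ⟨hg₂, e₂⟩ := h₂ q hq.2
    refine ⟨fun hmem => ((q : RealSpectrum A).isPrime.mem_or_mem hmem).elim hg₁ hg₂, ?_⟩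
    have : (⟨g₁ * g₂, _⟩ : (q : RealSpectrum A).asIdeal.primeCompl)
        = ⟨g₁, hg₁⟩ * ⟨g₂, hg₂⟩ := rfl
    rw [Pi.add_apply, e₁, e₂, this]
    exact (IsLocalization.mk'_add a₁ a₂ ⟨g₁, hg₁⟩ ⟨g₂, hg₂⟩).symm
  neg_mem' := by
    rintro s hs p
    obtain ⟨V, hV, hpV, hVU, a, g, h⟩ := hs p
    refine ⟨V, hV, hpV, hVU, -a, g, fun q hq => ?_⟩
    obtain ⟨hg, e⟩ := h q hq
    refine ⟨hg, ?_⟩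
    rw [Pi.neg_apply, e, IsLocalization.mk'_eq_mul_mk'_one,
      IsLocalization.mk'_eq_mul_mk'_one (-a), map_neg, neg_mul]
  mul_mem' := by
    rintro s t hs ht p
    obtain ⟨V₁, hV₁, hpV₁, hV₁U, a₁, g₁, h₁⟩ := hs p
    obtain ⟨V₂, hV₂, hpV₂, hV₂U, a₂, g₂, h₂⟩ := ht p
    refine ⟨V₁ ∩ V₂, hV₁.inter hV₂, ⟨hpV₁, hpV₂⟩, fun x hx => hV₁U hx.1,
      a₁ * a₂, g₁ * g₂, fun q hq => ?_⟩
    obtain ⟨hg₁, e₁⟩ := h₁ q hq.1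
    obtain ⟨hg₂, e₂⟩ := h₂ q hq.2
    refine ⟨fun hmem => ((q : RealSpectrum A).isPrime.mem_or_mem hmem).elim hg₁ hg₂, ?_⟩
    have : (⟨g₁ * g₂, _⟩ : (q : RealSpectrum A).asIdeal.primeCompl)
        = ⟨g₁, hg₁⟩ * ⟨g₂, hg₂⟩ := rfl
    rw [Pi.mul_apply, e₁, e₂, this, IsLocalization.mk'_mul]

end RealSpectrum

section Aux

open RealSpectrum

variable {A : Type*} [CommRing A]

theorem sigma_not_mem_of_f_not_mem {f x : A} (hx : x ∈ sigmaMonoid f)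
    (p : RealSpectrum A) (hf : f ∉ p.asIdeal) : x ∉ p.asIdeal := by
  obtain ⟨m, n, c, rfl⟩ := (mem_sigmaMonoid_iff f x).mp hx
  intro hmem
  have hsum : (∑ i : Fin (n + 1), (Fin.cons (f ^ m) c : Fin (n + 1) → A) i ^ 2)
      ∈ p.asIdeal := by
    rw [Fin.sum_univ_succ]
    simp only [Fin.cons_zero, Fin.cons_succ]
    rw [← pow_mul, mul_comm m 2]
    exact hmem
  have h0 := p.isReal (n + 1) _ hsum 0
  rw [Fin.cons_zero] at h0
  exact hf (p.isPrime.mem_of_pow_mem m h0)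

/-- The annihilator of an element, as an ideal. -/
def annIdeal (a : A) : Ideal A where
  carrier := {x | x * a = 0}
  zero_mem' := by simp
  add_mem' := by
    intro x y hx hy
    simp only [Set.mem_setOf_eq] at *
    rw [add_mul, hx, hy, add_zero]
  smul_mem' := by
    intro c x hx
    simp only [Set.mem_setOf_eq, smul_eq_mul] at *
    rw [mul_assoc, hx, mul_zero]

theorem mem_annIdeal_iff {a x : A} : x ∈ annIdeal a ↔ x * a = 0 := Iff.rfl

theorem exists_real_prime_of_disjoint {J : Ideal A} {g : A}
    (hdisj : ∀ x ∈ J, x ∉ sigmaMonoid g) :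
    ∃ p : RealSpectrum A, J ≤ p.asIdeal ∧ g ∉ p.asIdeal := by
  classical
  set S : Set (Ideal A) := {I | ∀ x ∈ I, x ∉ sigmaMonoid g} with hS
  have hchain : ∀ c ⊆ S, IsChain (· ≤ ·) c → ∀ y ∈ c, ∃ ub ∈ S, ∀ z ∈ c, z ≤ ub := by
    intro c hcS hc y hy
    have : Nonempty c := ⟨⟨y, hy⟩⟩
    refine ⟨sSup c, ?_, fun z hz => le_sSup hz⟩
    intro x hx hxS
    obtain ⟨I, hI⟩ := (Submodule.mem_iSup_of_directed _ hc.directedOn.directed_val).mp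
      (sSup_eq_iSup' c ▸ hx)
    exact hcS I.2 _ hI hxS
  obtain ⟨p, hJp, hmax⟩ := zorn_le_nonempty₀ S hchain J hdisj
  · -- p is maximal among ideals disjoint from Σ_g
    have hpS : ∀ x ∈ p, x ∉ sigmaMonoid g := hmax.prop
    have hprime : p.IsPrime := by
      refine Ideal.isPrime_of_maximally_disjoint p (sigmaMonoid g)
        (Set.disjoint_left.mpr hpS) (fun I hI hd => ?_)
      exact hmax.not_prop_of_gt hI (fun x hx => Set.disjoint_left.mp hd hx)
    have hreal : IsRealIdeal p := by
      intro n a hsuma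
      by_contra hne
      push_neg at hne
      obtain ⟨k, hk⟩ := hne
      have hlt : p < p ⊔ Ideal.span {a k} := Submodule.lt_sup_iff_notMem.mpr hk
      have hnd := hmax.not_prop_of_gt hlt
      simp only [hS, Set.mem_setOf_eq] at hnd
      push_neg at hnd
      obtain ⟨σ, hσsup, hσS⟩ := hnd
      rcases Submodule.mem_sup.mp hσsup with ⟨x, hx, y, hy, rfl⟩
      rcases Ideal.mem_span_singleton'.mp hy with ⟨c, rfl⟩
      set e : Fin n → A := fun i => if i = k then 0 else c * a i with he_def
      have hsum_e : (∑ i, e i ^ 2) = c ^ 2 * (∑ i, a i ^ 2) - (c * a k) ^ 2 := by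
        have h1 : ∀ i : Fin n, e i ^ 2
            = c ^ 2 * a i ^ 2 - (if i = k then (c * a k) ^ 2 else 0) := by
          intro i
          simp only [he_def]
          split_ifs with h
          · subst h; ring
          · ring
        rw [Finset.sum_congr rfl fun i _ => h1 i, Finset.sum_sub_distrib,
          Finset.sum_ite_eq' Finset.univ k fun _ => (c * a k) ^ 2, Finset.mul_sum]
        simp [mul_pow]
      have hmem_p : (x + c * a k) ^ 2 + ∑ i, e i ^ 2 ∈ p := by
        have hid : (x + c * a k) ^ 2 + ∑ i, e i ^ 2
            = x * (x + 2 * (c * a k)) + c ^ 2 * (∑ i, a i ^ 2) := by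
          rw [hsum_e]; ring
        rw [hid]
        exact Ideal.add_mem _ (Ideal.mul_mem_right _ _ hx) (Ideal.mul_mem_left _ _ hsuma)
      have hmem_S : (x + c * a k) ^ 2 + ∑ i, e i ^ 2 ∈ sigmaMonoid g := by
        obtain ⟨mm, ss, hss, heq⟩ := Submonoid.mul_mem _ hσS hσS
        exact ⟨mm, ss + ∑ i, e i ^ 2, SumSq.add hss ⟨n, e, rfl⟩, by
          rw [sq, heq]; ring⟩
      exact hpS _ hmem_p hmem_S
    refine ⟨⟨p, hprime, hreal⟩, hJp, fun hg => ?_⟩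
    have hgS : g ^ 2 ∈ sigmaMonoid g :=
      (mem_sigmaMonoid_iff g _).mpr ⟨1, 0, Fin.elim0, by simp⟩
    exact hpS _ (Ideal.pow_mem_of_mem p hg 2 two_pos) hgS

theorem exists_sigma_mem {J : Ideal A} {g : A}
    (h : ∀ p : RealSpectrum A, J ≤ p.asIdeal → g ∈ p.asIdeal) :
    ∃ σ ∈ sigmaMonoid g, σ ∈ J := by
  by_contra hc
  push_neg at hc
  obtain ⟨p, hJp, hg⟩ := exists_real_prime_of_disjoint
    (J := J) (g := g) (fun x hx hxS => hc x hxS hx)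
  exact hg (h p hJp)

theorem exists_pow_mul_eq_zero_of_sigma_mul_eq_zero (hA : IsRealRing A) {g τ d : A}
    (hτ : τ ∈ sigmaMonoid g) (h : τ * d = 0) : ∃ m : ℕ, g ^ m * d = 0 := by
  obtain ⟨m, n, c, rfl⟩ := (mem_sigmaMonoid_iff g τ).mp hτ
  refine ⟨m, ?_⟩
  have hg2 : g ^ (2 * m) = g ^ m * g ^ m := by rw [two_mul, pow_add]
  have key : (∑ i : Fin (n + 1),
      (Fin.cons (g ^ m * d) (fun i => c i * d) : Fin (n + 1) → A) i ^ 2) = 0 := by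
    rw [Fin.sum_univ_succ]
    simp only [Fin.cons_zero, Fin.cons_succ]
    have h2 : ((g ^ (2 * m) + ∑ i, c i ^ 2) * d) * d = 0 := by rw [h, zero_mul]
    rw [← h2, hg2]
    simp only [mul_pow]
    rw [← Finset.sum_mul]
    ring
  have h0 := hA (n + 1) _ key 0
  rwa [Fin.cons_zero] at h0

end Aux

set_option synthInstance.maxHeartbeats 1000000
set_option maxHeartbeats 2000000
section Construction

open RealSpectrum

variable {A : Type*} [CommRing A]

/-- The canonical map `A → O_X(D(f))` sending `a` to the constant fraction `a/1`. -/
noncomputable def toRegular (f : A) :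
    A →+* ↥(regularFunctions (basicOpen f) (isOpen_basicOpen f)) :=
  RingHom.codRestrict
    (Pi.ringHom fun q : ↥(basicOpen f) =>
      algebraMap A (Localization.AtPrime (q : RealSpectrum A).asIdeal)) _
    (fun a p => ⟨basicOpen f, isOpen_basicOpen f, p.2, le_refl _, a, 1, fun q _ =>
      ⟨fun h1 => (q : RealSpectrum A).isPrime.ne_top ((Ideal.eq_top_iff_one _).mpr h1), by
        rw [show (⟨1, _⟩ : (q : RealSpectrum A).asIdeal.primeCompl) = 1 from rfl,
          IsLocalization.mk'_one]
        rfl⟩⟩)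

theorem toRegular_isUnit (f : A) (σ : (sigmaMonoid f)) : IsUnit (toRegular f σ) := by
  refine IsUnit.of_mul_eq_one
    ⟨fun q => IsLocalization.mk' (Localization.AtPrime (q : RealSpectrum A).asIdeal) (1 : A)
      (⟨(σ : A), sigma_not_mem_of_f_not_mem σ.2 q.1 q.2⟩ :
        (q : RealSpectrum A).asIdeal.primeCompl), ?_⟩ ?_
  · intro p
    exact ⟨basicOpen f, isOpen_basicOpen f, p.2, le_refl _, 1, (σ : A), fun q _ =>
      ⟨sigma_not_mem_of_f_not_mem σ.2 q.1 q.2, rfl⟩⟩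
  · apply Subtype.ext
    funext q
    show algebraMap A (Localization.AtPrime (q : RealSpectrum A).asIdeal) (σ : A) *
      IsLocalization.mk' _ (1 : A) _ = 1
    exact (IsLocalization.mk'_spec' (Localization.AtPrime (q : RealSpectrum A).asIdeal) (1 : A)
      (⟨(σ : A), sigma_not_mem_of_f_not_mem σ.2 q.1 q.2⟩ :
        (q : RealSpectrum A).asIdeal.primeCompl)).trans (map_one _)

/-- The canonical homomorphism `ψ : Σ_f⁻¹A → O_X(D(f))`. -/
noncomputable def psiHom (f : A) :
    Localization (sigmaMonoid f) →+* ↥(regularFunctions (basicOpen f) (isOpen_basicOpen f)) :=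
  IsLocalization.lift (toRegular_isUnit f)

theorem psiHom_eval (f : A) (a : A) (σ : sigmaMonoid f) (q : ↥(basicOpen f))
    (hσ : (σ : A) ∉ (q : RealSpectrum A).asIdeal) :
    (psiHom f (IsLocalization.mk' (Localization (sigmaMonoid f)) a σ)).1 q =
      IsLocalization.mk' (Localization.AtPrime (q : RealSpectrum A).asIdeal) a
        (⟨(σ : A), hσ⟩ : (q : RealSpectrum A).asIdeal.primeCompl) := by
  have hspec := (IsLocalization.lift_mk'_spec (S := Localization (sigmaMonoid f))
      (g := toRegular f) (toRegular_isUnit f) a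
      (psiHom f (IsLocalization.mk' (Localization (sigmaMonoid f)) a σ)) σ).mp rfl
  have h2 : algebraMap A (Localization.AtPrime (q : RealSpectrum A).asIdeal) a
      = algebraMap A (Localization.AtPrime (q : RealSpectrum A).asIdeal) (σ : A) *
        (psiHom f (IsLocalization.mk' (Localization (sigmaMonoid f)) a σ)).1 q :=
    congrFun (congrArg Subtype.val hspec) q
  exact IsLocalization.eq_mk'_iff_mul_eq.mpr (by rw [mul_comm, ← h2])

theorem psiHom_injective (f : A) : Function.Injective (psiHom f) := by
  rw [injective_iff_map_eq_zero]
  intro x hx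
  obtain ⟨⟨a, σ⟩, rfl⟩ := IsLocalization.mk'_surjective (sigmaMonoid f) x
  rw [IsLocalization.mk'_eq_zero_iff]
  have hann : ∀ p : RealSpectrum A, annIdeal a ≤ p.asIdeal → f ∈ p.asIdeal := by
    intro p hle
    by_contra hf
    have hσq : (σ : A) ∉ p.asIdeal := sigma_not_mem_of_f_not_mem σ.2 p hf
    have he := psiHom_eval f a σ ⟨p, hf⟩ hσq
    rw [hx] at he
    have h0 : IsLocalization.mk' (Localization.AtPrime p.asIdeal) a
        (⟨(σ : A), hσq⟩ : p.asIdeal.primeCompl) = 0 := by rw [← he]; rfl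
    obtain ⟨u, hu⟩ := (IsLocalization.mk'_eq_zero_iff _ _).mp h0
    exact u.2 (hle (show (u : A) ∈ annIdeal a from hu))
  obtain ⟨τ, hτS, hτa⟩ := exists_sigma_mem hann
  exact ⟨⟨τ, hτS⟩, hτa⟩

end Construction

section Surjectivity

open RealSpectrum

variable {A : Type*} [CommRing A]

theorem exists_global_rep (hA : IsRealRing A) (f : A)
    (s : ↥(regularFunctions (basicOpen f) (isOpen_basicOpen f))) :
    ∃ (a σ : A) (hσ : σ ∈ sigmaMonoid f),
      ∀ (q : ↥(basicOpen f)) (hq : σ ∉ (q : RealSpectrum A).asIdeal),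
        s.1 q = IsLocalization.mk' (Localization.AtPrime (q : RealSpectrum A).asIdeal) a
          (⟨σ, hq⟩ : (q : RealSpectrum A).asIdeal.primeCompl) := by
  classical
  -- Step 1: locally, `s` is a fraction with a denominator valid on a whole basic open set
  have step2 : ∀ p : ↥(basicOpen f), ∃ h a : A, h ∉ (p : RealSpectrum A).asIdeal ∧
      ∀ (q : ↥(basicOpen f)) (hq : h ∉ (q : RealSpectrum A).asIdeal),
        s.1 q = IsLocalization.mk' (Localization.AtPrime (q : RealSpectrum A).asIdeal) a
          (⟨h, hq⟩ : (q : RealSpectrum A).asIdeal.primeCompl) := by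
    intro p
    obtain ⟨V, hVopen, hpV, hVU, a, g, hfrac⟩ := s.2 p
    obtain ⟨I, hI⟩ := (isClosed_iff Vᶜ).mp hVopen.isClosed_compl
    have hpI : ¬ I ≤ (p : RealSpectrum A).asIdeal := by
      intro hle
      have : (p : RealSpectrum A) ∈ Vᶜ := by rw [hI]; exact hle
      exact this hpV
    obtain ⟨h0, h0I, h0p⟩ := SetLike.not_le_iff_exists.mp hpI
    obtain ⟨hgp, -⟩ := hfrac p hpV
    refine ⟨h0 * g, h0 * a, ?_, ?_⟩
    · exact fun hm => ((p : RealSpectrum A).isPrime.mem_or_mem hm).elim h0p hgp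
    · intro q hq
      have hh0 : h0 ∉ (q : RealSpectrum A).asIdeal :=
        fun h => hq ((q : RealSpectrum A).asIdeal.mul_mem_right g h)
      have hqV : (q : RealSpectrum A) ∈ V := by
        by_contra hc
        have : (q : RealSpectrum A) ∈ zeroLocus I := by rw [← hI]; exact hc
        exact hh0 (this h0I)
      obtain ⟨hg, he⟩ := hfrac q hqV
      rw [he, IsLocalization.mk'_eq_iff_eq]
      exact congrArg _ (by ring)
  choose h a hhp hrep using step2
  -- Step 2: a global "unit" σ₀ in the span of the local denominators
  obtain ⟨σ₀, hσ₀S, hσ₀J⟩ : ∃ σ₀ ∈ sigmaMonoid f, σ₀ ∈ Ideal.span (Set.range h) := by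
    apply exists_sigma_mem
    intro p hle
    by_contra hf
    exact hhp ⟨p, hf⟩ (hle (Ideal.subset_span (Set.mem_range_self (⟨p, hf⟩ : ↥(basicOpen f)))))
  rw [Ideal.span, Submodule.mem_span_set'] at hσ₀J
  obtain ⟨n, c, v, hv⟩ := hσ₀J
  choose P hP using fun i : Fin n => (v i).2
  -- Step 3: pairwise compatibility, with powers thanks to `A` being real
  have pair : ∀ i j : Fin n, ∃ m : ℕ, (f * h (P i) * h (P j)) ^ m *
      (a (P i) * h (P j) - a (P j) * h (P i)) = 0 := by
    intro i j
    set d : A := a (P i) * h (P j) - a (P j) * h (P i) with hd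
    have hann : ∀ p : RealSpectrum A, annIdeal d ≤ p.asIdeal →
        f * h (P i) * h (P j) ∈ p.asIdeal := by
      intro p hle
      by_contra hfm
      have hf : f ∉ p.asIdeal := fun hh =>
        hfm (Ideal.mul_mem_right _ _ (Ideal.mul_mem_right _ _ hh))
      have hi : h (P i) ∉ p.asIdeal := fun hh =>
        hfm (Ideal.mul_mem_right _ _ (Ideal.mul_mem_left _ _ hh))
      have hj : h (P j) ∉ p.asIdeal := fun hh => hfm (Ideal.mul_mem_left _ _ hh)
      have e1 := hrep (P i) ⟨p, hf⟩ hi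
      have e2 := hrep (P j) ⟨p, hf⟩ hj
      rw [e1] at e2
      rw [IsLocalization.mk'_eq_iff_eq] at e2
      obtain ⟨u, hu⟩ := (IsLocalization.eq_iff_exists p.asIdeal.primeCompl _).mp e2
      have hud : (u : A) * d = 0 := by
        have huu : (u : A) * (h (P j) * a (P i)) = (u : A) * (h (P i) * a (P j)) := hu
        rw [hd]
        linear_combination huu
      exact u.2 (hle (show (u : A) ∈ annIdeal d from hud))
    obtain ⟨τ, hτS, hτd⟩ := exists_sigma_mem hann
    exact exists_pow_mul_eq_zero_of_sigma_mul_eq_zero hA hτS hτd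
  choose m hm using pair
  set M : ℕ := Finset.univ.sup (fun ij : Fin n × Fin n => m ij.1 ij.2) with hM
  have hm' : ∀ i j : Fin n, (f * h (P i) * h (P j)) ^ M *
      (a (P i) * h (P j) - a (P j) * h (P i)) = 0 := by
    intro i j
    have hle : m i j ≤ M := by
      rw [hM]
      exact Finset.le_sup (f := fun ij : Fin n × Fin n => m ij.1 ij.2) (Finset.mem_univ (i, j))
    obtain ⟨k, hk⟩ := Nat.exists_eq_add_of_le hle
    rw [hk, pow_add, mul_comm ((f * h (P i) * h (P j)) ^ (m i j)), mul_assoc, hm i j, mul_zero]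
  -- Step 4: normalized representatives with exact compatibility
  set B : Fin n → A := fun i => a (P i) * (f ^ M * h (P i) ^ M) with hB
  set G : Fin n → A := fun i => h (P i) * (f ^ M * h (P i) ^ M) with hG
  have hrel : ∀ i j : Fin n, B i * G j = B j * G i := by
    intro i j
    have hmm := hm' i j
    rw [mul_pow, mul_pow] at hmm
    simp only [hB, hG]
    linear_combination (f ^ M) * hmm
  -- Step 5: a global denominator σ in the span of the G's
  obtain ⟨σ, hσS, hσJ⟩ : ∃ σ ∈ sigmaMonoid f, σ ∈ Ideal.span (Set.range G) := by
    apply exists_sigma_mem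
    intro p hle
    by_contra hf
    have hσ₀p : σ₀ ∉ p.asIdeal := sigma_not_mem_of_f_not_mem hσ₀S p hf
    have hex : ∃ i, h (P i) ∉ p.asIdeal := by
      by_contra hall
      push_neg at hall
      apply hσ₀p
      rw [← hv]
      exact Ideal.sum_mem _ fun i _ => by
        have : ((v i : A)) ∈ p.asIdeal := by rw [← hP i]; exact hall i
        simpa using Ideal.mul_mem_left _ (c i) this
    obtain ⟨i, hi⟩ := hex
    have hGi : G i ∉ p.asIdeal := by
      intro hmem
      rcases p.isPrime.mem_or_mem hmem with h1 | h2
      · exact hi h1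
      rcases p.isPrime.mem_or_mem h2 with h3 | h4
      · exact hf (p.isPrime.mem_of_pow_mem M h3)
      · exact hi (p.isPrime.mem_of_pow_mem M h4)
    exact hGi (hle (Ideal.subset_span (Set.mem_range_self i)))
  rw [Ideal.span] at hσJ
  obtain ⟨e, he⟩ := (Submodule.mem_span_range_iff_exists_fun A).mp hσJ
  simp only [smul_eq_mul] at he
  refine ⟨∑ i, e i * B i, σ, hσS, ?_⟩
  intro q hq
  have hex : ∃ i, G i ∉ (q : RealSpectrum A).asIdeal := by
    by_contra hall
    push_neg at hall
    refine hq ?_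
    rw [← he]
    exact Ideal.sum_mem _ fun i _ => Ideal.mul_mem_left _ _ (hall i)
  obtain ⟨i, hGi⟩ := hex
  have hHi : h (P i) ∉ (q : RealSpectrum A).asIdeal :=
    fun hh => hGi (Ideal.mul_mem_right _ _ hh)
  have hc : f ^ M * h (P i) ^ M ∉ (q : RealSpectrum A).asIdeal :=
    fun hh => hGi (Ideal.mul_mem_left _ _ hh)
  have key : (∑ j, e j * B j) * G i = B i * σ := by
    calc (∑ j, e j * B j) * G i
        = ∑ j, e j * (B j * G i) := by
          rw [Finset.sum_mul]
          exact Finset.sum_congr rfl fun j _ => by ring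
      _ = ∑ j, e j * (B i * G j) := by
          exact Finset.sum_congr rfl fun j _ => by rw [hrel j i]
      _ = B i * ∑ j, e j * G j := by
          rw [Finset.mul_sum]
          exact Finset.sum_congr rfl fun j _ => by ring
      _ = B i * σ := by rw [he]
  rw [hrep (P i) q hHi, IsLocalization.mk'_eq_iff_eq]
  rw [IsLocalization.eq_iff_exists (q : RealSpectrum A).asIdeal.primeCompl]
  refine ⟨⟨f ^ M * h (P i) ^ M, hc⟩, ?_⟩
  show (f ^ M * h (P i) ^ M) * (σ * a (P i)) = (f ^ M * h (P i) ^ M) * (h (P i) * (∑ j, e j * B j))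
  have hBi : B i = a (P i) * (f ^ M * h (P i) ^ M) := rfl
  have hGi' : G i = h (P i) * (f ^ M * h (P i) ^ M) := rfl
  rw [hGi', hBi] at key
  linear_combination -key

end Surjectivity


open RealSpectrum in
/-- For a real ring `A`, the canonical homomorphism `ψ : Σ_f⁻¹A → O_X(D(f))` sending
`a / (f^(2k) + ∑ x²)` to the function `p ↦ a / (f^(2k) + ∑ x²) ∈ A_p` is a ring
isomorphism; in particular every abstract real regular function on `D(f)` is globally of
the form `p ↦ a / (f^(2k) + ∑ x²)`. -/
theorem canonical_map_isomorphism {A : Type*} [CommRing A] (hA : IsRealRing A) (f : A) :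
    ∃ ψ : Localization (sigmaMonoid f) ≃+*
        regularFunctions (basicOpen f) (isOpen_basicOpen f),
      (∀ (a : A) (σ : sigmaMonoid f) (q : (basicOpen f : Set (RealSpectrum A)))
          (hσ : (σ : A) ∉ (q : RealSpectrum A).asIdeal),
        (ψ (Localization.mk a σ)).1 q =
          IsLocalization.mk' (Localization.AtPrime (q : RealSpectrum A).asIdeal) a
            (⟨(σ : A), hσ⟩ : (q : RealSpectrum A).asIdeal.primeCompl)) ∧
      ∀ s : regularFunctions (basicOpen f) (isOpen_basicOpen f),
        ∃ (a : A) (k : ℕ) (n : ℕ) (x : Fin n → A),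
          ∀ (q : (basicOpen f : Set (RealSpectrum A)))
            (hq : f ^ (2 * k) + ∑ i, x i ^ 2 ∉ (q : RealSpectrum A).asIdeal),
            s.1 q = IsLocalization.mk'
              (Localization.AtPrime (q : RealSpectrum A).asIdeal) a
              (⟨f ^ (2 * k) + ∑ i, x i ^ 2, hq⟩ :
                (q : RealSpectrum A).asIdeal.primeCompl) := by
  have hbij : Function.Bijective (psiHom f) := by
    constructor
    · exact psiHom_injective f
    · intro s
      obtain ⟨a, σ, hσ, hrep⟩ := exists_global_rep hA f s
      refine ⟨IsLocalization.mk' (Localization (sigmaMonoid f)) a ⟨σ, hσ⟩, ?_⟩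
      apply Subtype.ext
      funext q
      rw [psiHom_eval f a ⟨σ, hσ⟩ q (sigma_not_mem_of_f_not_mem hσ q.1 q.2)]
      exact (hrep q _).symm
  refine ⟨RingEquiv.ofBijective (psiHom f) hbij, ?_, ?_⟩
  · intro a σ q hσq
    rw [Localization.mk_eq_mk']
    exact psiHom_eval f a σ q hσq
  · intro s
    obtain ⟨a, σ, hσ, hrep⟩ := exists_global_rep hA f s
    obtain ⟨k, nn, x, rfl⟩ := (mem_sigmaMonoid_iff f σ).mp hσ
    exact ⟨a, k, nn, x, fun q hq => hrep q hq⟩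
end

section
/- Let A be a real ring and X its real Zariski spectrum. Then the ring of abstract real regular functions on the whole space X is isomorphic to Σ_1^{-1}A, the localization of A at the multiplicative set Σ_1 = { 1 + Σ_{i=1}^n a_i² : a_i ∈ A, n ∈ ℕ ∪ {0} }, via the canonical map sending a/(1 + Σ x²) to the function p ↦ a/(1 + Σ x²) ∈ A_p. -/
namespace RealGlobalAux

open RealSpectrum

variable {A : Type*} [CommRing A]

theorem SumSq.finsetSum {ι : Type*} (s : Finset ι) (f : ι → A) :
    (∑ j ∈ s, f j ^ 2) ∈ SumSq A := by
  classical
  induction s using Finset.induction_on with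
  | empty => simpa using SumSq.zero
  | insert _ _ hx ih =>
    rw [Finset.sum_insert hx]
    exact SumSq.add (SumSq.sq _) ih

theorem sigma1_notMem (p : RealSpectrum A) {σ : A} (hσ : σ ∈ sigma1 A) :
    σ ∉ p.asIdeal := by
  intro hmem
  obtain ⟨n, c, rfl⟩ := (mem_sigma1_iff σ).mp hσ
  have hsum : (∑ i : Fin (n + 1), (Fin.cons 1 c : Fin (n + 1) → A) i ^ 2) ∈ p.asIdeal := by
    rw [Fin.sum_univ_succ]
    simpa [Fin.cons_succ] using hmem
  have h1 := p.isReal _ _ hsum 0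
  rw [Fin.cons_zero] at h1
  exact p.isPrime.ne_top ((Ideal.eq_top_iff_one _).mpr h1)

/-- Zorn-type lemma: an ideal disjoint from a suitable multiplicative set is
contained in a real prime disjoint from it. -/
theorem exists_real_prime (S : Submonoid A)
    (hS : ∀ u ∈ S, ∀ σ ∈ SumSq A, u * u + σ ∈ S)
    (I : Ideal A) (hI : ∀ x ∈ I, x ∉ S) :
    ∃ p : RealSpectrum A, I ≤ p.asIdeal ∧ ∀ x ∈ p.asIdeal, x ∉ S := by
  classical
  set T : Set (Ideal A) := {J | ∀ x ∈ J, x ∉ S} with hT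
  have hub : ∀ c ⊆ T, IsChain (· ≤ ·) c → ∀ y ∈ c, ∃ ub ∈ T, ∀ z ∈ c, z ≤ ub := by
    intro c hcT hchain y hy
    refine ⟨sSup c, fun x hx => ?_, fun z hz => le_sSup hz⟩
    obtain ⟨K, hKc, hxK⟩ :=
      (Submodule.mem_sSup_of_directed ⟨y, hy⟩ hchain.directedOn).mp hx
    exact hcT hKc x hxK
  obtain ⟨J, hIJ, hJmax⟩ := zorn_le_nonempty₀ T hub I hI
  · have hJT : ∀ x ∈ J, x ∉ S := hJmax.1
    have key : ∀ x : A, x ∉ J → ∃ u ∈ S, ∃ j ∈ J, ∃ t : A, u = j + t * x := by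
      intro x hx
      have hlt : ¬ (J ⊔ Ideal.span {x} ≤ J) := by
        intro hle
        exact hx (hle (Submodule.mem_sup_right (Ideal.subset_span rfl)))
      have hnotT : (J ⊔ Ideal.span {x}) ∉ T := fun hmem =>
        hlt (hJmax.2 hmem le_sup_left)
      rw [hT, Set.mem_setOf_eq] at hnotT
      push_neg at hnotT
      obtain ⟨u, huJ, huS⟩ := hnotT
      obtain ⟨j, hj, y, hy, rfl⟩ := Submodule.mem_sup.mp huJ
      obtain ⟨t, rfl⟩ := Ideal.mem_span_singleton'.mp hy
      exact ⟨j + t * x, huS, j, hj, t, rfl⟩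
    have hne : J ≠ ⊤ := by
      intro h
      exact hJT 1 (h ▸ Submodule.mem_top) S.one_mem
    have hprime : J.IsPrime := by
      refine ⟨hne, fun {x y} hxy => ?_⟩
      by_contra hcon
      push_neg at hcon
      obtain ⟨hx, hy⟩ := hcon
      obtain ⟨u, huS, j, hj, t, rfl⟩ := key x hx
      obtain ⟨v, hvS, j', hj', t', rfl⟩ := key y hy
      have hmem : (j + t * x) * (j' + t' * y) ∈ J := by
        have : (j + t * x) * (j' + t' * y)
            = j * (j' + t' * y) + j' * (t * x) + (t * t') * (x * y) := by ring
        rw [this]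
        exact Ideal.add_mem _ (Ideal.add_mem _ (Ideal.mul_mem_right _ _ hj)
          (Ideal.mul_mem_right _ _ hj')) (Ideal.mul_mem_left _ _ hxy)
      exact hJT _ hmem (S.mul_mem huS hvS)
    have hreal : IsRealIdeal J := by
      intro n b hsum i
      by_contra hbi
      obtain ⟨u, huS, j, hj, t, hu⟩ := key (b i) hbi
      set σ : A := ∑ l ∈ Finset.univ.erase i, (t * b l) ^ 2 with hσ
      have hσS : σ ∈ SumSq A := SumSq.finsetSum _ _
      have he : (t * b i) ^ 2 + σ = ∑ l, (t * b l) ^ 2 :=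
        Finset.add_sum_erase _ (fun l => (t * b l) ^ 2) (Finset.mem_univ i)
      have ht : ∑ l, (t * b l) ^ 2 = t ^ 2 * ∑ l, b l ^ 2 := by
        rw [Finset.mul_sum]
        exact Finset.sum_congr rfl fun l _ => by ring
      have hmem : u * u + σ ∈ J := by
        have e : u * u + σ = j * (j + 2 * (t * b i)) + t ^ 2 * ∑ l, b l ^ 2 := by
          rw [hu]
          linear_combination he + ht
        rw [e]
        exact Ideal.add_mem _ (Ideal.mul_mem_right _ _ hj) (Ideal.mul_mem_left _ _ hsum)
      exact hJT _ hmem (hS u huS σ hσS)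
    exact ⟨⟨J, hprime, hreal⟩, hIJ, hJT⟩

theorem sigmaMonoid_cond (f : A) :
    ∀ u ∈ sigmaMonoid f, ∀ σ ∈ SumSq A, u * u + σ ∈ sigmaMonoid f := by
  rintro u ⟨m, s, hs, rfl⟩ σ hσ
  have hf2m : f ^ (2 * m) ∈ SumSq A := by
    have := SumSq.sq (f ^ m); rwa [← pow_mul, mul_comm m 2] at this
  refine ⟨2 * m, 2 * (f ^ (2 * m) * s) + s * s + σ, ?_, ?_⟩
  · refine SumSq.add (SumSq.add ?_ (SumSq.mul hs hs)) hσ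
    rw [two_mul]
    exact SumSq.add (SumSq.mul hf2m hs) (SumSq.mul hf2m hs)
  · rw [show 2 * (2 * m) = 2 * m + 2 * m from by ring, pow_add]
    try ring

theorem sigma1_cond :
    ∀ u ∈ sigma1 A, ∀ σ ∈ SumSq A, u * u + σ ∈ sigma1 A := by
  rintro u ⟨s, hs, rfl⟩ σ hσ
  refine ⟨2 * s + s * s + σ, ?_, by ring⟩
  refine SumSq.add (SumSq.add ?_ (SumSq.mul hs hs)) hσ
  rw [two_mul]
  exact SumSq.add hs hs

theorem eq_zero_of_pow (hA : IsRealRing A) :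
    ∀ (n : ℕ) (x : A), x ^ (n + 1) = 0 → x = 0 := by
  intro n
  induction n with
  | zero => intro x hx; simpa using hx
  | succ n ih =>
    intro x hx
    have h2 : (x ^ (n + 1)) ^ 2 = 0 := by
      rw [← pow_mul, show (n + 1) * 2 = (n + 2) + n from by ring, pow_add, hx, zero_mul]
    have := hA 1 (fun _ => x ^ (n + 1)) (by simpa using h2) 0
    exact ih x this

theorem eq_zero_of_forall_real_prime (hA : IsRealRing A) {x : A}
    (h : ∀ p : RealSpectrum A, x ∈ p.asIdeal) : x = 0 := by
  by_cases h0 : (0 : A) ∈ sigmaMonoid x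
  · obtain ⟨m, n, c, hc⟩ := (mem_sigmaMonoid_iff x 0).mp h0
    have hsum : (∑ i : Fin (n + 1), (Fin.cons (x ^ m) c : Fin (n + 1) → A) i ^ 2) = 0 := by
      rw [Fin.sum_univ_succ, Fin.cons_zero, ← pow_mul,
        show m * 2 = 2 * m from mul_comm m 2]
      simp only [Fin.cons_succ]
      exact hc.symm
    have hxm := hA (n + 1) _ hsum 0
    rw [Fin.cons_zero] at hxm
    cases m with
    | zero =>
      have h1 : (1 : A) = 0 := by simpa using hxm
      calc x = x * 1 := (mul_one x).symm
        _ = x * 0 := by rw [h1]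
        _ = 0 := mul_zero x
    | succ m => exact eq_zero_of_pow hA m x hxm
  · obtain ⟨p, -, hp⟩ := exists_real_prime (sigmaMonoid x) (sigmaMonoid_cond x) ⊥
      (fun y hy hyS => by
        rw [Ideal.mem_bot] at hy
        exact h0 (hy ▸ hyS))
    exact (hp (x * x) (Ideal.mul_mem_left _ x (h p))
      ⟨1, 0, SumSq.zero, by norm_num [sq]⟩).elim

end RealGlobalAux
namespace RealGlobalAux

set_option synthInstance.maxHeartbeats 1000000
set_option maxHeartbeats 2000000

open RealSpectrum

variable {A : Type*} [CommRing A]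

theorem const_mem (a : A) :
    (fun p : (Set.univ : Set (RealSpectrum A)) =>
      algebraMap A (Localization.AtPrime (p : RealSpectrum A).asIdeal) a)
    ∈ regularFunctions (Set.univ : Set (RealSpectrum A)) isOpen_univ := fun p =>
  ⟨Set.univ, isOpen_univ, Set.mem_univ _, le_refl _, a, 1, fun q _ =>
    ⟨fun h1 => (q : RealSpectrum A).isPrime.ne_top ((Ideal.eq_top_iff_one _).mpr h1), by
      have : (⟨1, _⟩ : (q : RealSpectrum A).asIdeal.primeCompl) = 1 := rfl
      rw [this, IsLocalization.mk'_one]⟩⟩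

/-- The canonical constant-fractions ring hom `A → O_X(X)`. -/
def constHom : A →+* regularFunctions (Set.univ : Set (RealSpectrum A)) isOpen_univ where
  toFun a := ⟨_, const_mem a⟩
  map_one' := Subtype.ext (funext fun _ => map_one _)
  map_mul' x y := Subtype.ext (funext fun _ => map_mul _ x y)
  map_zero' := Subtype.ext (funext fun _ => map_zero _)
  map_add' x y := Subtype.ext (funext fun _ => map_add _ x y)

theorem inv_mem (σ : sigma1 A) :
    (fun p : (Set.univ : Set (RealSpectrum A)) =>
      IsLocalization.mk' (Localization.AtPrime (p : RealSpectrum A).asIdeal) (1 : A)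
        (⟨(σ : A), sigma1_notMem _ σ.2⟩ : (p : RealSpectrum A).asIdeal.primeCompl))
    ∈ regularFunctions (Set.univ : Set (RealSpectrum A)) isOpen_univ := fun p =>
  ⟨Set.univ, isOpen_univ, Set.mem_univ _, le_refl _, 1, σ, fun q _ =>
    ⟨sigma1_notMem _ σ.2, rfl⟩⟩

theorem isUnit_constHom (σ : sigma1 A) : IsUnit (constHom (A := A) σ) :=
  IsUnit.of_mul_eq_one ⟨_, inv_mem σ⟩ (Subtype.ext (funext fun p => by
    have h := IsLocalization.mk'_spec'
      (Localization.AtPrime (p : RealSpectrum A).asIdeal) (1 : A)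
      (⟨(σ : A), sigma1_notMem _ σ.2⟩ : (p : RealSpectrum A).asIdeal.primeCompl)
    rw [map_one] at h
    exact h))

/-- The canonical map `Σ₁⁻¹A → O_X(X)`. -/
noncomputable def liftHom :
    Localization (sigma1 A) →+*
      regularFunctions (Set.univ : Set (RealSpectrum A)) isOpen_univ :=
  IsLocalization.lift (fun σ : sigma1 A => isUnit_constHom σ)

theorem liftHom_algebraMap (a : A) :
    liftHom (A := A) (algebraMap A (Localization (sigma1 A)) a) = constHom a :=
  IsLocalization.lift_eq _ _

theorem liftHom_mk (a : A) (σ : sigma1 A) (p : (Set.univ : Set (RealSpectrum A)))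
    (hσp : (σ : A) ∉ (p : RealSpectrum A).asIdeal) :
    (liftHom (A := A) (Localization.mk a σ)).1 p =
      IsLocalization.mk' (Localization.AtPrime (p : RealSpectrum A).asIdeal) a
        (⟨(σ : A), hσp⟩ : (p : RealSpectrum A).asIdeal.primeCompl) := by
  have h0 : Localization.mk a σ * algebraMap A (Localization (sigma1 A)) (σ : A)
      = algebraMap A (Localization (sigma1 A)) a := by
    rw [Localization.mk_eq_mk']
    exact IsLocalization.mk'_spec _ a σ
  have h1 := congrArg (liftHom (A := A)) h0
  rw [RingHom.map_mul, liftHom_algebraMap, liftHom_algebraMap] at h1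
  have h2 := congrFun (congrArg Subtype.val h1) p
  rw [IsLocalization.eq_mk'_iff_mul_eq]
  exact h2

theorem liftHom_injective (hA : IsRealRing A) :
    Function.Injective (liftHom (A := A)) := by
  rw [injective_iff_map_eq_zero]
  intro z hz
  revert hz
  induction z using Localization.induction_on with
  | H y =>
    obtain ⟨a, σ⟩ := y
    intro hz
    have ha : a = 0 := by
      apply eq_zero_of_forall_real_prime hA
      intro r
      have hv := liftHom_mk a σ ⟨r, Set.mem_univ r⟩ (sigma1_notMem r σ.2)
      rw [hz] at hv
      have h0 : IsLocalization.mk' (Localization.AtPrime r.asIdeal) a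
          (⟨(σ : A), sigma1_notMem r σ.2⟩ : r.asIdeal.primeCompl) = 0 := by
        rw [← hv]; rfl
      obtain ⟨cc, hcc⟩ := (IsLocalization.mk'_eq_zero_iff _ _).mp h0
      have hmem : (cc : A) * a ∈ r.asIdeal := by rw [hcc]; exact zero_mem _
      exact (r.isPrime.mem_or_mem hmem).resolve_left cc.2
    rw [ha, Localization.mk_zero]

theorem liftHom_surjective (hA : IsRealRing A) :
    Function.Surjective (liftHom (A := A)) := by
  rintro ⟨s, hs⟩
  have step1 : ∀ p : RealSpectrum A, ∃ k a : A, k ∉ p.asIdeal ∧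
      ∀ (q : RealSpectrum A) (hq : k ∉ q.asIdeal),
        s ⟨q, Set.mem_univ q⟩ =
          IsLocalization.mk' (Localization.AtPrime q.asIdeal) a
            (⟨k, hq⟩ : q.asIdeal.primeCompl) := by
    intro p
    obtain ⟨V, hV, hpV, -, b, g, hfrac⟩ := hs ⟨p, Set.mem_univ p⟩
    obtain ⟨I, hVc⟩ := (isClosed_iff Vᶜ).mp (isClosed_compl_iff.mpr hV)
    have hpc : ¬ I ≤ p.asIdeal := fun hm =>
      (show p ∈ Vᶜ by rw [hVc]; exact hm) hpV
    obtain ⟨f, hfI, hfp⟩ := SetLike.not_le_iff_exists.mp hpc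
    obtain ⟨hgp, -⟩ := hfrac ⟨p, Set.mem_univ p⟩ hpV
    refine ⟨f * g, b * f, fun hmem => (p.isPrime.mem_or_mem hmem).elim hfp hgp, ?_⟩
    intro q hq
    have hfq : f ∉ q.asIdeal := fun h => hq (Ideal.mul_mem_right _ _ h)
    have hqV : q ∈ V := by
      by_contra hqV
      have : q ∈ zeroLocus I := by rw [← hVc]; exact hqV
      exact hfq (this hfI)
    obtain ⟨hgq', heq⟩ := hfrac ⟨q, Set.mem_univ q⟩ hqV
    rw [heq]
    have hd : (⟨f * g, hq⟩ : q.asIdeal.primeCompl) = ⟨g, hgq'⟩ * ⟨f, hfq⟩ :=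
      Subtype.ext (mul_comm f g)
    rw [hd]
    exact (IsLocalization.mk'_cancel b ⟨g, hgq'⟩ ⟨f, hfq⟩).symm
  choose k w hk hkv using step1
  have overlap : ∀ p q : RealSpectrum A,
      k p * k q * (w p * k q - w q * k p) = 0 := by
    intro p q
    apply eq_zero_of_forall_real_prime hA
    intro r
    by_contra hr
    have hkp : k p ∉ r.asIdeal := fun h =>
      hr (Ideal.mul_mem_right _ _ (Ideal.mul_mem_right _ _ h))
    have hkq : k q ∉ r.asIdeal := fun h =>
      hr (Ideal.mul_mem_right _ _ (Ideal.mul_mem_left _ _ h))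
    have hdr : w p * k q - w q * k p ∉ r.asIdeal := fun h =>
      hr (Ideal.mul_mem_left _ _ h)
    have h1 := hkv p r hkp
    have h2 := hkv q r hkq
    rw [h1, IsLocalization.mk'_eq_iff_eq] at h2
    obtain ⟨cc, hcc⟩ := (IsLocalization.eq_iff_exists
      (M := r.asIdeal.primeCompl) (S := Localization.AtPrime r.asIdeal)).mp h2
    have hcd : (cc : A) * (w p * k q - w q * k p) ∈ r.asIdeal := by
      have : (cc : A) * (w p * k q - w q * k p) = 0 := by linear_combination hcc
      rw [this]; exact zero_mem _
    exact hdr ((r.isPrime.mem_or_mem hcd).resolve_left cc.2)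
  have hmeet : ∃ τ, τ ∈ sigma1 A ∧
      τ ∈ Ideal.span (Set.range fun p : RealSpectrum A => k p ^ 2) := by
    by_contra hdis
    push_neg at hdis
    obtain ⟨r, hrI, -⟩ := exists_real_prime (sigma1 A) sigma1_cond
      (Ideal.span (Set.range fun p : RealSpectrum A => k p ^ 2))
      (fun x hx hxS => hdis x hxS hx)
    exact hk r (r.isPrime.mem_of_pow_mem 2 (hrI (Ideal.subset_span ⟨r, rfl⟩)))
  obtain ⟨τ, hτS, hτI⟩ := hmeet
  have hτI' : τ ∈ Submodule.span A (Set.range fun p : RealSpectrum A => k p ^ 2) := hτI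
  rw [Finsupp.mem_span_range_iff_exists_finsupp] at hτI'
  obtain ⟨c, hc⟩ := hτI'
  refine ⟨Localization.mk (c.sum fun p b => b * (w p * k p)) ⟨τ, hτS⟩, ?_⟩
  apply Subtype.ext
  funext P
  have hτr : τ ∉ (P : RealSpectrum A).asIdeal := sigma1_notMem _ hτS
  have hval := liftHom_mk (c.sum fun p b => b * (w p * k p)) ⟨τ, hτS⟩ P hτr
  rw [hval]
  have hj : ∃ j ∈ c.support, k j ∉ (P : RealSpectrum A).asIdeal := by
    by_contra hall
    push_neg at hall
    apply hτr
    rw [← hc, Finsupp.sum]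
    refine Ideal.sum_mem _ fun j hjs => ?_
    rw [smul_eq_mul, sq]
    exact Ideal.mul_mem_left _ _ (Ideal.mul_mem_right _ _ (hall j hjs))
  obtain ⟨j, hjs, hkj⟩ := hj
  have hsP := hkv j (P : RealSpectrum A) hkj
  refine Eq.trans ?_ hsP.symm
  have hkey : (c.sum fun p b => b * (w p * k p)) * k j ^ 2 = (w j * k j) * τ := by
    rw [← hc, Finsupp.sum_mul, Finsupp.mul_sum]
    apply Finsupp.sum_congr
    intro p hp
    simp only [smul_eq_mul]
    linear_combination (c p) * overlap p j
  have h2 : (k j) ^ 2 ∉ (P : RealSpectrum A).asIdeal := fun h =>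
    hkj ((P : RealSpectrum A).isPrime.mem_of_pow_mem 2 h)
  have e1 : IsLocalization.mk' (Localization.AtPrime (P : RealSpectrum A).asIdeal)
      (c.sum fun p b => b * (w p * k p))
      (⟨τ, hτr⟩ : (P : RealSpectrum A).asIdeal.primeCompl) =
      IsLocalization.mk' _ (w j * k j)
        (⟨k j ^ 2, h2⟩ : (P : RealSpectrum A).asIdeal.primeCompl) :=
    IsLocalization.mk'_eq_of_eq' hkey.symm
  rw [e1]
  have hd2 : (⟨k j ^ 2, h2⟩ : (P : RealSpectrum A).asIdeal.primeCompl)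
      = ⟨k j, hkj⟩ * ⟨k j, hkj⟩ := Subtype.ext (sq (k j))
  rw [hd2]
  exact IsLocalization.mk'_cancel (w j) ⟨k j, hkj⟩ ⟨k j, hkj⟩

end RealGlobalAux
open RealSpectrum in
/-- For a real ring `A`, the ring of abstract real regular functions on the whole real
Zariski spectrum is isomorphic to `Σ_1⁻¹A`, via the canonical map sending
`a / (1 + ∑ x²)` to the function `p ↦ a / (1 + ∑ x²) ∈ A_p`. -/
theorem global_sections_isomorphism {A : Type*} [CommRing A] (hA : IsRealRing A) :
    ∃ ψ : Localization (sigma1 A) ≃+*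
        regularFunctions (Set.univ : Set (RealSpectrum A)) isOpen_univ,
      ∀ (a : A) (σ : sigma1 A) (p : (Set.univ : Set (RealSpectrum A)))
        (hσ : (σ : A) ∉ (p : RealSpectrum A).asIdeal),
        (ψ (Localization.mk a σ)).1 p =
          IsLocalization.mk' (Localization.AtPrime (p : RealSpectrum A).asIdeal) a
            (⟨(σ : A), hσ⟩ : (p : RealSpectrum A).asIdeal.primeCompl) := by
  exact ⟨RingEquiv.ofBijective (RealGlobalAux.liftHom (A := A))
      ⟨RealGlobalAux.liftHom_injective hA, RealGlobalAux.liftHom_surjective hA⟩,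
    fun a σ p hσ => RealGlobalAux.liftHom_mk a σ p hσ⟩
end

section
/- If h, f ∈ A and D(h) ⊆ D(f) (every real prime ideal containing f contains h), then there exist n ∈ ℕ, a sum of squares Σ x² in A, and u ∈ A such that h^{2n} + Σ x² = u·f. -/
section Aux

variable {A : Type*} [CommRing A]

lemma aux_isSumSq_mul_sq {a : A} {S : A} (hS : IsSumSq S) : IsSumSq (a * a * S) := by
  induction hS with
  | zero => simpa using IsSumSq.zero
  | @sq_add b T hT ih =>
      have : a * a * (b * b + T) = (a * b) * (a * b) + a * a * T := by ring
      rw [this]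
      exact IsSumSq.sq_add _ ih

lemma aux_isSumSq_mul {S T : A} (hS : IsSumSq S) (hT : IsSumSq T) : IsSumSq (S * T) := by
  induction hS with
  | zero => simpa using IsSumSq.zero
  | @sq_add a S' hS' ih =>
      have : (a * a + S') * T = a * a * T + S' * T := by ring
      rw [this]
      exact (aux_isSumSq_mul_sq hT).add ih

lemma aux_isSumSq_exists {S : A} (hS : IsSumSq S) :
    ∃ (k : ℕ) (x : Fin k → A), S = ∑ i, x i ^ 2 := by
  induction hS with
  | zero => exact ⟨0, fun i => 0, by simp⟩
  | @sq_add a S' hS' ih =>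
      obtain ⟨k, x, rfl⟩ := ih
      exact ⟨k + 1, Fin.cons a x, by simp [Fin.sum_univ_succ, sq]⟩

lemma aux_isSumSq_sum {k : ℕ} (x : Fin k → A) (s : Finset (Fin k)) :
    IsSumSq (∑ i ∈ s, x i ^ 2) := by
  classical
  induction s using Finset.induction with
  | empty => simpa using IsSumSq.zero
  | insert _ _ hns ih =>
      rw [Finset.sum_insert hns, sq]
      exact IsSumSq.sq_add _ ih

end Aux

open RealSpectrum in
/-- If `D(h) ⊆ D(f)`, then `h ^ (2n) + ∑ x² = u * f` for some `n`, some sum of squares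
`∑ x²`, and some `u ∈ A`. -/
theorem exists_of_basicOpen_subset {A : Type*} [CommRing A] (h f : A)
    (hsub : basicOpen h ⊆ basicOpen f) :
    ∃ (n k : ℕ) (x : Fin k → A) (u : A), h ^ (2 * n) + ∑ i, x i ^ 2 = u * f := by
  classical
  by_contra hcon
  push_neg at hcon
  -- the "multiplicative" set of elements h^(2n) + sum of squares
  set S : Set A := {a | ∃ (n : ℕ) (σ : A), IsSumSq σ ∧ a = h ^ (2 * n) + σ} with hSdef
  have hSmul : ∀ a ∈ S, ∀ b ∈ S, a * b ∈ S := by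
    rintro a ⟨n, σ, hσ, rfl⟩ b ⟨m, τ, hτ, rfl⟩
    refine ⟨n + m, h ^ (2 * n) * τ + σ * h ^ (2 * m) + σ * τ, ?_, by ring⟩
    have h1 : IsSumSq (h ^ (2 * n) * τ) := by
      have : h ^ (2 * n) * τ = h ^ n * h ^ n * τ := by ring
      rw [this]; exact aux_isSumSq_mul_sq hτ
    have h2 : IsSumSq (σ * h ^ (2 * m)) := by
      have : σ * h ^ (2 * m) = h ^ m * h ^ m * σ := by ring
      rw [this]; exact aux_isSumSq_mul_sq hσ
    exact (h1.add h2).add (aux_isSumSq_mul hσ hτ)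
  -- the family of ideals containing f and disjoint from S
  set 𝒜 : Set (Ideal A) := {J | f ∈ J ∧ ∀ a ∈ S, a ∉ J} with h𝒜
  have hstart : Ideal.span {f} ∈ 𝒜 := by
    refine ⟨Ideal.subset_span rfl, ?_⟩
    rintro a ⟨n, σ, hσ, rfl⟩ ha
    obtain ⟨k, x, rfl⟩ := aux_isSumSq_exists hσ
    rw [Ideal.mem_span_singleton'] at ha
    obtain ⟨u, hu⟩ := ha
    exact hcon n k x u hu.symm
  obtain ⟨J, -, hJmem, hJmax⟩ := zorn_le_nonempty₀ 𝒜 (fun c hc hchain y hy => by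
    refine ⟨sSup c, ?_, fun z hz => le_sSup hz⟩
    have hdir : DirectedOn (· ≤ ·) c := hchain.directedOn
    constructor
    · exact (le_sSup hy : y ≤ sSup c) (hc hy).1
    · rintro a ha hmem
      rw [Submodule.mem_sSup_of_directed ⟨y, hy⟩ hdir] at hmem
      obtain ⟨z, hzc, hz⟩ := hmem
      exact (hc hzc).2 a ha hz) (Ideal.span {f}) hstart
  obtain ⟨hfJ, hJS⟩ := hJmem
  -- key: any strictly larger ideal meets S
  have hkey : ∀ a : A, a ∉ J → ∃ s ∈ S, ∃ j ∈ J, ∃ x : A, s = j + x * a := by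
    intro a haJ
    have hlt : J < J ⊔ Ideal.span {a} :=
      lt_of_le_of_ne le_sup_left (fun he => haJ (he ▸ Submodule.mem_sup_right
        (Ideal.subset_span rfl)))
    have : ¬ (J ⊔ Ideal.span {a}) ∈ 𝒜 := fun hmem => hlt.not_ge (hJmax hmem hlt.le)
    rw [h𝒜, Set.mem_setOf_eq] at this
    push_neg at this
    obtain ⟨s, hsS, hsJ⟩ := this (le_sup_left (a := J) hfJ)
    obtain ⟨j, hj, b, hb, hjb⟩ := Submodule.mem_sup.mp hsJ
    rw [Ideal.mem_span_singleton'] at hb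
    obtain ⟨x, rfl⟩ := hb
    exact ⟨s, hsS, j, hj, x, hjb.symm⟩
  -- J ≠ ⊤
  have h1S : (1 : A) ∈ S := ⟨0, 0, IsSumSq.zero, by simp⟩
  have hJne : J ≠ ⊤ := fun ht => hJS 1 h1S (ht ▸ Submodule.mem_top)
  -- J is prime
  have hprime : J.IsPrime := by
    rw [Ideal.isPrime_iff]
    refine ⟨hJne, ?_⟩
    intro a b hab
    by_contra hcon2
    push_neg at hcon2
    obtain ⟨haJ, hbJ⟩ := hcon2
    obtain ⟨s, hsS, j₁, hj₁, x, rfl⟩ := hkey a haJ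
    obtain ⟨t, htS, j₂, hj₂, y, rfl⟩ := hkey b hbJ
    have hmem : (j₁ + x * a) * (j₂ + y * b) ∈ J := by
      have : (j₁ + x * a) * (j₂ + y * b)
          = j₁ * (j₂ + y * b) + (x * a) * j₂ + (x * y) * (a * b) := by ring
      rw [this]
      exact J.add_mem (J.add_mem (J.mul_mem_right _ hj₁) (J.mul_mem_left _ hj₂))
        (J.mul_mem_left _ hab)
    exact hJS _ (hSmul _ hsS _ htS) hmem
  -- J is real
  have hreal : IsRealIdeal J := by
    intro k a hsum i
    by_contra haJ
    obtain ⟨s, hsS, j, hj, x, hs⟩ := hkey (a i) haJ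
    -- s^2 + ∑_{j ≠ i} (x * a j)^2 ∈ J ∩ S
    have hmemJ : s ^ 2 + ∑ l ∈ Finset.univ.erase i, (x * a l) ^ 2 ∈ J := by
      have hT : (∑ l, a l ^ 2) = a i ^ 2 + ∑ l ∈ Finset.univ.erase i, a l ^ 2 :=
        (Finset.add_sum_erase _ _ (Finset.mem_univ i)).symm
      have hx : ∑ l ∈ Finset.univ.erase i, (x * a l) ^ 2
          = x ^ 2 * ∑ l ∈ Finset.univ.erase i, a l ^ 2 := by
        rw [Finset.mul_sum]; exact Finset.sum_congr rfl fun l _ => by ring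
      have heq : s ^ 2 + ∑ l ∈ Finset.univ.erase i, (x * a l) ^ 2
          = (j * (j + 2 * (x * a i))) + x ^ 2 * (∑ l, a l ^ 2) := by
        rw [hs, hx, hT]; ring
      rw [heq]
      exact J.add_mem (J.mul_mem_right _ hj) (J.mul_mem_left _ hsum)
    have hmemS : s ^ 2 + ∑ l ∈ Finset.univ.erase i, (x * a l) ^ 2 ∈ S := by
      obtain ⟨n, σ, hσ, rfl⟩ := hsS
      refine ⟨2 * n, (h ^ (2 * n) * σ + σ * h ^ (2 * n) + σ * σ)
        + ∑ l ∈ Finset.univ.erase i, (x * a l) ^ 2, ?_, by ring⟩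
      have h1 : IsSumSq (h ^ (2 * n) * σ) := by
        have : h ^ (2 * n) * σ = h ^ n * h ^ n * σ := by ring
        rw [this]; exact aux_isSumSq_mul_sq hσ
      have h2 : IsSumSq (σ * h ^ (2 * n)) := by
        have : σ * h ^ (2 * n) = h ^ n * h ^ n * σ := by ring
        rw [this]; exact aux_isSumSq_mul_sq hσ
      exact ((h1.add h2).add (aux_isSumSq_mul hσ hσ)).add (aux_isSumSq_sum _ _)
    exact hJS _ hmemS hmemJ
  -- conclude
  have hhJ : h ∉ J := by
    intro hhJ
    exact hJS (h ^ (2 * 1) + 0) ⟨1, 0, IsSumSq.zero, rfl⟩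
      (by simpa using J.pow_mem_of_mem hhJ 2 (by norm_num))
  exact hsub (show (⟨J, hprime, hreal⟩ : RealSpectrum A) ∈ basicOpen h from hhJ) hfJ
end
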